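/- Let 0 < a < b and let f be four times differentiable at a and b. Define M_{f,2,0}(a,b) = [(b-a)(b f''(b) + a f''(a)) + 2(a-2b) f'(b) + 2(2a-b) f'(a) + 6(f(b)-f(a))] / [(b-a)(f''(b) + f''(a)) - 2(f'(b) - f'(a))], assuming the denominator is nonzero. If P and Q are the unique polynomials of degree ≤ 3 with P(a) = f(a), P'(a) = f'(a), P''(a) = f''(a), P(b) = f(b), and Q(a) = f(a), Q(b) = f(b), Q'(b) = f'(b), Q''(b) = f''(b), then P(x) - Q(x) = (x-a)(x-b)(cx+d) where c = -[(b-a)(f''(b)+f''(a)) - 2(f'(b)-f'(a))]/(2(b-a)²) and -d/c = M_{f,2,0}(a,b). -/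
import Mathlib

lemma evalCubic (P : Polynomial ℝ) (h : P.natDegree ≤ 3) (x : ℝ) :
    P.eval x = P.coeff 0 + P.coeff 1 * x + P.coeff 2 * x^2 + P.coeff 3 * x^3 := by
  rw [Polynomial.eval_eq_sum_range' (lt_of_le_of_lt h (by norm_num : (3:ℕ) < 4))]
  simp [Finset.sum_range_succ]

lemma derivCubic (P : Polynomial ℝ) (h : P.natDegree ≤ 3) (x : ℝ) :
    deriv (fun t => P.eval t) x
      = P.coeff 1 + 2 * P.coeff 2 * x + 3 * P.coeff 3 * x^2 := by
  rw [P.deriv]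
  have h2 : P.derivative.natDegree ≤ 2 :=
    (Polynomial.natDegree_derivative_le P).trans (by omega)
  rw [Polynomial.eval_eq_sum_range' (lt_of_le_of_lt h2 (by norm_num : (2:ℕ) < 3))]
  simp [Finset.sum_range_succ, Polynomial.coeff_derivative]
  ring

lemma deriv2Cubic (P : Polynomial ℝ) (h : P.natDegree ≤ 3) (x : ℝ) :
    deriv (deriv (fun t => P.eval t)) x
      = 2 * P.coeff 2 + 6 * P.coeff 3 * x := by
  have h1 : deriv (fun t => P.eval t) = fun t => P.derivative.eval t :=
    funext fun y => P.deriv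
  rw [h1, P.derivative.deriv]
  have h2 : P.derivative.derivative.natDegree ≤ 1 :=
    (Polynomial.natDegree_derivative_le _).trans
      (by have := (Polynomial.natDegree_derivative_le P).trans (show P.natDegree - 1 ≤ 2 by omega); omega)
  rw [Polynomial.eval_eq_sum_range' (lt_of_le_of_lt h2 (by norm_num : (1:ℕ) < 2))]
  simp [Finset.sum_range_succ, Polynomial.coeff_derivative]
  ring

set_option maxHeartbeats 2000000 in
theorem stmt17 (a b : ℝ) (ha : 0 < a) (hab : a < b) (f : ℝ → ℝ)
    (hfa : ContDiffAt ℝ 4 f a) (hfb : ContDiffAt ℝ 4 f b)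
    (hden : (b - a) * (deriv (deriv f) b + deriv (deriv f) a)
        - 2 * (deriv f b - deriv f a) ≠ 0)
    (P Q : Polynomial ℝ) (hPdeg : P.natDegree ≤ 3) (hQdeg : Q.natDegree ≤ 3)
    (hPa0 : P.eval a = f a)
    (hPa1 : deriv (fun t => P.eval t) a = deriv f a)
    (hPa2 : deriv (deriv (fun t => P.eval t)) a = deriv (deriv f) a)
    (hPb0 : P.eval b = f b)
    (hQa0 : Q.eval a = f a)
    (hQb0 : Q.eval b = f b)
    (hQb1 : deriv (fun t => Q.eval t) b = deriv f b)
    (hQb2 : deriv (deriv (fun t => Q.eval t)) b = deriv (deriv f) b)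
    (c : ℝ)
    (hc : c = -((b - a) * (deriv (deriv f) b + deriv (deriv f) a)
        - 2 * (deriv f b - deriv f a)) / (2 * (b - a) ^ 2)) :
    ∃ d : ℝ, (∀ x : ℝ, P.eval x - Q.eval x = (x - a) * (x - b) * (c * x + d)) ∧
      -d / c = ((b - a) * (b * deriv (deriv f) b + a * deriv (deriv f) a)
          + 2 * (a - 2 * b) * deriv f b + 2 * (2 * a - b) * deriv f a
          + 6 * (f b - f a)) /
        ((b - a) * (deriv (deriv f) b + deriv (deriv f) a)
          - 2 * (deriv f b - deriv f a)) := by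
  have hb : b - a ≠ 0 := sub_ne_zero.mpr hab.ne'
  rw [evalCubic P hPdeg] at hPa0 hPb0
  rw [evalCubic Q hQdeg] at hQa0 hQb0
  rw [derivCubic P hPdeg] at hPa1
  rw [derivCubic Q hQdeg] at hQb1
  rw [deriv2Cubic P hPdeg] at hPa2
  rw [deriv2Cubic Q hQdeg] at hQb2
  have hp3 : P.coeff 3 = (f b - f a - deriv f a * (b - a)
      - deriv (deriv f) a * (b - a) ^ 2 / 2) / (b - a) ^ 3 := by
    rw [eq_div_iff (pow_ne_zero 3 hb)]
    linear_combination hPb0 - hPa0 - (b - a) * hPa1 - ((b - a) ^ 2 / 2) * hPa2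
  have hq3 : Q.coeff 3 = (f b - f a - deriv f b * (b - a)
      + deriv (deriv f) b * (b - a) ^ 2 / 2) / (b - a) ^ 3 := by
    rw [eq_div_iff (pow_ne_zero 3 hb)]
    linear_combination hQb0 - hQa0 - (b - a) * hQb1 + ((b - a) ^ 2 / 2) * hQb2
  have hp2 : P.coeff 2 = deriv (deriv f) a / 2 - 3 * a * P.coeff 3 := by
    linear_combination hPa2 / 2
  have hq2 : Q.coeff 2 = deriv (deriv f) b / 2 - 3 * b * Q.coeff 3 := by
    linear_combination hQb2 / 2
  have hp1 : P.coeff 1 = deriv f a - 2 * P.coeff 2 * a - 3 * P.coeff 3 * a ^ 2 := by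
    linear_combination hPa1
  have hq1 : Q.coeff 1 = deriv f b - 2 * Q.coeff 2 * b - 3 * Q.coeff 3 * b ^ 2 := by
    linear_combination hQb1
  have hp0 : P.coeff 0 = f a - P.coeff 1 * a - P.coeff 2 * a ^ 2 - P.coeff 3 * a ^ 3 := by
    linear_combination hPa0
  have hq0 : Q.coeff 0 = f a - Q.coeff 1 * a - Q.coeff 2 * a ^ 2 - Q.coeff 3 * a ^ 3 := by
    linear_combination hQa0
  refine ⟨P.coeff 2 - Q.coeff 2 + c * (a + b), fun x => ?_, ?_⟩
  · rw [evalCubic P hPdeg, evalCubic Q hQdeg, hp0, hq0, hp1, hq1, hp2, hq2, hp3, hq3, hc]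
    field_simp
    ring
  · have hc0 : c ≠ 0 := by
      rw [hc]
      exact div_ne_zero (neg_ne_zero.mpr hden) (by positivity)
    rw [div_eq_div_iff hc0 hden]
    rw [hp2, hq2, hp3, hq3, hc]
    field_simp
    ring
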